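/- If a QBF φ = Π.ψ in PCNF is unsatisfiable under a QCDCL assignment A (i.e., φ[A] is unsatisfiable), then adding the clause C = ⋁_{l∈A} l̄ conjunctively to the matrix preserves satisfiability: Π.ψ is satisfiable if and only if Π.(ψ ∧ C) is satisfiable. -/

import Mathlib

/-- Variables are natural numbers. -/
abbrev Var := ℕ

/-- A literal is a variable together with a polarity. -/
abbrev Lit := Var × Bool

/-- Negation of a literal. -/
def Lit.negate (l : Lit) : Lit := (l.1, !l.2)

/-- A clause is a finite set of literals (interpreted disjunctively). -/
abbrev Clause := Finset Lit

/-- A cube is a finite set of literals (interpreted conjunctively). -/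
abbrev Cube := Finset Lit

/-- A CNF is a finite set of clauses. -/
abbrev Cnf := Finset Clause

/-- An assignment is a finite set of literals. -/
abbrev Assignment := Finset Lit

/-- An assignment contains no complementary pair of literals. -/
def Assignment.consistent (A : Assignment) : Prop := ∀ l ∈ A, Lit.negate l ∉ A

/-- A total assignment satisfies a literal. -/
def litSat (σ : Var → Bool) (l : Lit) : Prop := σ l.1 = l.2

/-- A total assignment satisfies a clause. -/
def clauseSat (σ : Var → Bool) (C : Clause) : Prop := ∃ l ∈ C, litSat σ l

/-- A total assignment satisfies a CNF (is a propositional model). -/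
def cnfSat (σ : Var → Bool) (ψ : Cnf) : Prop := ∀ C ∈ ψ, clauseSat σ C

/-- A total assignment satisfies a cube. -/
def cubeSat (σ : Var → Bool) (D : Cube) : Prop := ∀ l ∈ D, litSat σ l

/-- Restriction of a clause by an assignment: delete falsified literals. -/
def Clause.restrict (C : Clause) (A : Assignment) : Clause :=
  C.filter (fun l => Lit.negate l ∉ A)

/-- Restriction ψ[A] of a CNF by an assignment: remove satisfied clauses and
delete falsified literals from the remaining clauses. -/
def Cnf.restrict (ψ : Cnf) (A : Assignment) : Cnf :=
  (ψ.filter (fun C => ∀ l ∈ A, l ∉ C)).image (fun C => Clause.restrict C A)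

/-- Quantifiers. -/
inductive Quant | ex | all
deriving DecidableEq

/-- A quantifier prefix: a list of quantified variables (outermost first). -/
abbrev QPrefix := List (Quant × Var)

/-- Restriction of a prefix by an assignment: remove assigned variables. -/
def QPrefix.restrict (pre : QPrefix) (A : Assignment) : QPrefix :=
  pre.filter (fun q => q.2 ∉ A.image Prod.fst)

/-- Satisfiability of the PCNF `pre.ψ`, defined recursively over the prefix:
an existential variable needs one satisfiable branch, a universal variable
both; a quantifier-free CNF is satisfiable iff it is propositionally true. -/
def qbfSat : QPrefix → Cnf → Prop
  | [], ψ => ∃ σ : Var → Bool, cnfSat σ ψ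
  | (Quant.ex, x) :: pre, ψ =>
      qbfSat pre (Cnf.restrict ψ {(x, true)}) ∨ qbfSat pre (Cnf.restrict ψ {(x, false)})
  | (Quant.all, x) :: pre, ψ =>
      qbfSat pre (Cnf.restrict ψ {(x, true)}) ∧ qbfSat pre (Cnf.restrict ψ {(x, false)})

/-- Literal `l` is unit in the PCNF: the clause `(l)` occurs in the matrix
and the variable of `l` is existential. -/
def isUnit (pre : QPrefix) (ψ : Cnf) (l : Lit) : Prop :=
  ({l} : Clause) ∈ ψ ∧ (Quant.ex, l.1) ∈ pre

/-- Literal `l` occurs in the CNF. -/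
def occurs (ψ : Cnf) (l : Lit) : Prop := ∃ C ∈ ψ, l ∈ C

/-- Literal `l` is pure: it occurs but its negation does not. -/
def isPure (ψ : Cnf) (l : Lit) : Prop := occurs ψ l ∧ ¬ occurs ψ (Lit.negate l)

/-- Literals obtained by iterated unit/pure literal detection (QBCP), starting
from the decision assignment `A0`.  A pure existential literal is assigned
positively, a pure universal literal negatively; a unit existential literal is
assigned positively. -/
inductive PropChain (pre : QPrefix) (ψ : Cnf) (A0 : Assignment) : List Lit → Prop
  | nil : PropChain pre ψ A0 []
  | unit {ls : List Lit} {l : Lit} (h : PropChain pre ψ A0 ls)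
      (hu : isUnit pre (Cnf.restrict ψ (A0 ∪ ls.toFinset)) l) :
      PropChain pre ψ A0 (l :: ls)
  | pureEx {ls : List Lit} {l : Lit} (h : PropChain pre ψ A0 ls)
      (hp : isPure (Cnf.restrict ψ (A0 ∪ ls.toFinset)) l)
      (he : (Quant.ex, l.1) ∈ pre) :
      PropChain pre ψ A0 (l :: ls)
  | pureAll {ls : List Lit} {l : Lit} (h : PropChain pre ψ A0 ls)
      (hp : isPure (Cnf.restrict ψ (A0 ∪ ls.toFinset)) l)
      (ha : (Quant.all, l.1) ∈ pre) :
      PropChain pre ψ A0 (Lit.negate l :: ls)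

/-- A QCDCL assignment: a consistent assignment `A = A' ∪ A''` where the
decision literals `A'` assign exactly the variables of an initial segment of
the prefix and `A''` is obtained by unit/pure literal detection (QBCP). -/
def QCDCLAssignment (pre : QPrefix) (ψ : Cnf) (A : Assignment) : Prop :=
  Assignment.consistent A ∧
  ∃ (A0 : Assignment) (ls : List Lit) (k : ℕ),
    A = A0 ∪ ls.toFinset ∧
    A0.image Prod.fst = ((pre.take k).map Prod.snd).toFinset ∧
    PropChain pre ψ A0 ls

/-! ### Auxiliary development -/

namespace GCG

/-- Override `σ` by the partial assignment `α`. -/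
def ov (α : Assignment) (σ : Var → Bool) : Var → Bool :=
  fun x => if (x, true) ∈ α then true else if (x, false) ∈ α then false else σ x

lemma ov_mem {α : Assignment} (hc : Assignment.consistent α) {m : Lit} (hm : m ∈ α)
    (σ : Var → Bool) : litSat (ov α σ) m := by
  obtain ⟨x, b⟩ := m
  cases b with
  | true => simp [litSat, ov, hm]
  | false =>
    have hnt : (x, true) ∉ α := by
      intro h; exact hc _ hm (by simpa [Lit.negate] using h)
    simp [litSat, ov, hm, hnt]

lemma ov_notmem {α : Assignment} {x : Var} (hx : x ∉ α.image Prod.fst) (σ : Var → Bool) :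
    ov α σ x = σ x := by
  have h1 : (x, true) ∉ α := fun h => hx (Finset.mem_image.2 ⟨_, h, rfl⟩)
  have h2 : (x, false) ∉ α := fun h => hx (Finset.mem_image.2 ⟨_, h, rfl⟩)
  simp [ov, h1, h2]

lemma ov_insert {α : Assignment} {x : Var} {b : Bool} (h : (x, !b) ∉ α) (σ : Var → Bool) :
    ov (insert (x, b) α) σ = Function.update (ov α σ) x b := by
  funext v
  rcases eq_or_ne v x with rfl | hv
  · cases b <;> simp_all [ov, Function.update, Finset.mem_insert]
  · simp [ov, Function.update, hv, Finset.mem_insert, Prod.ext_iff]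

lemma consistent_subset {A B : Assignment} (hc : Assignment.consistent A) (h : B ⊆ A) :
    Assignment.consistent B := fun l hl hneg => hc l (h hl) (h hneg)

lemma consistent_insert {α : Assignment} (hc : Assignment.consistent α)
    {x : Var} (hx : x ∉ α.image Prod.fst) (c : Bool) :
    Assignment.consistent (insert (x, c) α) := by
  intro l hl hneg
  have hvar : ∀ m ∈ α, m.1 ≠ x := by
    intro m hm he; exact hx (Finset.mem_image.2 ⟨_, hm, he⟩)
  rcases Finset.mem_insert.1 hl with rfl | hl
  · rcases Finset.mem_insert.1 hneg with h | h
    · simp [Lit.negate, Prod.ext_iff] at h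
    · exact hvar _ h rfl
  · rcases Finset.mem_insert.1 hneg with h | h
    · have : l.1 = x := by
        have := congrArg Prod.fst h; simpa [Lit.negate] using this
      exact hvar _ hl this
    · exact hc _ hl h

lemma var_notin {α : Assignment} {l : Lit} (h1 : l ∉ α) (h2 : Lit.negate l ∉ α) :
    l.1 ∉ α.image Prod.fst := by
  intro h
  obtain ⟨m, hm, hfst⟩ := Finset.mem_image.1 h
  have : m = l ∨ m = Lit.negate l := by
    obtain ⟨x, c⟩ := m; obtain ⟨y, d⟩ := l
    simp only [Prod.fst] at hfst
    subst hfst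
    cases c <;> cases d <;> simp_all [Lit.negate]
  rcases this with rfl | rfl
  · exact h1 hm
  · exact h2 hm

lemma cnfSat_restrict_iff {α : Assignment} (hc : Assignment.consistent α)
    {ψ : Cnf} (σ : Var → Bool) :
    cnfSat σ (Cnf.restrict ψ α) ↔ cnfSat (ov α σ) ψ := by
  constructor
  · intro h C hC
    by_cases hkept : ∀ l ∈ α, l ∉ C
    · have hmem : Clause.restrict C α ∈ Cnf.restrict ψ α := by
        exact Finset.mem_image.2 ⟨C, Finset.mem_filter.2 ⟨hC, hkept⟩, rfl⟩
      obtain ⟨l, hl, hsat⟩ := h _ hmem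
      obtain ⟨hlC, hneg⟩ := Finset.mem_filter.1 hl
      have hlα : l ∉ α := fun h' => hkept l h' hlC
      have hx : l.1 ∉ α.image Prod.fst := var_notin hlα hneg
      exact ⟨l, hlC, by rwa [litSat, ov_notmem hx]⟩
    · push_neg at hkept
      obtain ⟨l, hlα, hlC⟩ := hkept
      exact ⟨l, hlC, ov_mem hc hlα σ⟩
  · intro h D hD
    obtain ⟨C, hC, rfl⟩ := Finset.mem_image.1 hD
    obtain ⟨hCψ, hkept⟩ := Finset.mem_filter.1 hC
    obtain ⟨l, hlC, hsat⟩ := h C hCψ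
    have hlα : l ∉ α := fun h' => hkept l h' hlC
    have hneg : Lit.negate l ∉ α := by
      intro h'
      have := ov_mem hc h' σ
      rw [litSat, Lit.negate] at this
      rw [litSat] at hsat
      simp only [Lit.negate] at this
      rw [hsat] at this
      exact (Bool.eq_not_self l.2).elim (by simpa using this.symm)
    have hx : l.1 ∉ α.image Prod.fst := var_notin hlα hneg
    refine ⟨l, Finset.mem_filter.2 ⟨hlC, hneg⟩, ?_⟩
    rwa [litSat, ov_notmem hx] at hsat

end GCG
namespace GCG

/-- Game semantics with a fixed matrix and a growing partial assignment. -/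
def sem : QPrefix → Cnf → Assignment → Prop
  | [], ψ, α => ∃ σ, cnfSat (ov α σ) ψ
  | (Quant.ex, x) :: pre, ψ, α =>
      sem pre ψ (insert (x, true) α) ∨ sem pre ψ (insert (x, false) α)
  | (Quant.all, x) :: pre, ψ, α =>
      sem pre ψ (insert (x, true) α) ∧ sem pre ψ (insert (x, false) α)

lemma semMono {ψ1 ψ2 : Cnf} (h : ∀ τ, cnfSat τ ψ1 → cnfSat τ ψ2) :
    ∀ (pre : QPrefix) (α : Assignment), sem pre ψ1 α → sem pre ψ2 α
  | [], _, ⟨σ, hσ⟩ => ⟨σ, h _ hσ⟩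
  | (Quant.ex, _) :: pre, _, h' => h'.imp (semMono h pre _) (semMono h pre _)
  | (Quant.all, _) :: pre, _, h' => ⟨semMono h pre _ h'.1, semMono h pre _ h'.2⟩

/-- Bookkeeping for walking under a quantifier. -/
lemma step_facts {q : Quant} {x : Var} {pre : QPrefix} {α : Assignment}
    (hnd : (((q, x) :: pre).map Prod.snd).Nodup)
    (hf : ∀ p ∈ (q, x) :: pre, p.2 ∉ α.image Prod.fst)
    (hc : Assignment.consistent α) (c : Bool) :
    (pre.map Prod.snd).Nodup ∧
    (∀ p ∈ pre, p.2 ∉ (insert (x, c) α).image Prod.fst) ∧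
    Assignment.consistent (insert (x, c) α) ∧
    (x, !c) ∉ α ∧ x ∉ α.image Prod.fst := by
  have hx : x ∉ α.image Prod.fst := hf _ (List.mem_cons_self)
  rw [List.map_cons] at hnd
  have hnd0 := List.nodup_cons.1 hnd
  refine ⟨hnd0.2, ?_, consistent_insert hc hx c, ?_, hx⟩
  · intro p hp hmem
    rw [Finset.image_insert] at hmem
    rcases Finset.mem_insert.1 hmem with h | h
    · exact hnd0.1 (by simp only at h ⊢; exact h ▸ List.mem_map.2 ⟨p, hp, rfl⟩)
    · exact hf p (List.mem_cons_of_mem _ hp) h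
  · intro h; exact hx (Finset.mem_image.2 ⟨_, h, rfl⟩)

lemma sem_witness {ψ : Cnf} :
    ∀ (pre : QPrefix) (α : Assignment), (pre.map Prod.snd).Nodup →
    (∀ p ∈ pre, p.2 ∉ α.image Prod.fst) → Assignment.consistent α →
    sem pre ψ α → ∃ τ, cnfSat τ ψ ∧ ∀ m ∈ α, litSat τ m := by
  intro pre
  induction pre with
  | nil =>
    rintro α _ _ hc ⟨σ, hσ⟩
    exact ⟨ov α σ, hσ, fun m hm => ov_mem hc hm σ⟩
  | cons hd tl ih =>
    obtain ⟨q, x⟩ := hd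
    intro α hnd hf hc hsem
    have key : ∀ c, sem tl ψ (insert (x, c) α) →
        ∃ τ, cnfSat τ ψ ∧ ∀ m ∈ α, litSat τ m := by
      intro c hs
      obtain ⟨hnd', hf', hc', -, -⟩ := step_facts hnd hf hc c
      obtain ⟨τ, hτ, hτα⟩ := ih _ hnd' hf' hc' hs
      exact ⟨τ, hτ, fun m hm => hτα m (Finset.mem_insert_of_mem hm)⟩
    cases q with
    | ex => rcases hsem with h | h
            · exact key true h
            · exact key false h
    | all => exact key true hsem.1

end GCG
namespace GCG

lemma clause_restrict_subset (C : Clause) (α : Assignment) : Clause.restrict C α ⊆ C :=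
  Finset.filter_subset _ _

lemma cnf_restrict_insert (ψ : Cnf) {α : Assignment} {x : Var} {b : Bool}
    (hx : x ∉ α.image Prod.fst) :
    Cnf.restrict (Cnf.restrict ψ α) {(x, b)} = Cnf.restrict ψ (insert (x, b) α) := by
  have hxb : ∀ c : Bool, (x, c) ∉ α := fun c h => hx (Finset.mem_image.2 ⟨_, h, rfl⟩)
  ext D
  simp only [Cnf.restrict, Finset.mem_image, Finset.mem_filter, Finset.mem_singleton,
    Finset.mem_insert, forall_eq]
  constructor
  · rintro ⟨D', ⟨⟨C, ⟨hC, hkept⟩, rfl⟩, hnotin⟩, rfl⟩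
    refine ⟨C, ⟨hC, ?_⟩, ?_⟩
    · intro l hl
      rcases hl with rfl | hl
      · intro hmem
        apply hnotin
        refine Finset.mem_filter.2 ⟨hmem, ?_⟩
        simpa [Lit.negate] using hxb (!b)
      · exact hkept l hl
    · ext m
      simp only [Clause.restrict, Finset.mem_filter, Finset.mem_singleton, Finset.mem_insert]
      tauto
  · rintro ⟨C, ⟨hC, hkept⟩, rfl⟩
    refine ⟨Clause.restrict C α, ⟨⟨C, ⟨hC, fun l hl => hkept l (Or.inr hl)⟩, rfl⟩, ?_⟩, ?_⟩
    · intro hmem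
      exact hkept (x, b) (Or.inl rfl) (clause_restrict_subset C α hmem)
    · ext m
      simp only [Clause.restrict, Finset.mem_filter, Finset.mem_singleton, Finset.mem_insert]
      tauto

lemma qprefix_restrict_insert (pre : QPrefix) (α : Assignment) (l : Lit) :
    QPrefix.restrict (QPrefix.restrict pre α) {l} = QPrefix.restrict pre (insert l α) := by
  unfold QPrefix.restrict
  rw [List.filter_filter]
  apply List.filter_congr
  intro q _
  simp only [Finset.image_insert, Finset.mem_insert, Finset.image_singleton,
    Finset.mem_singleton, decide_not, Bool.and_comm]
  simp [not_or]

lemma cnf_restrict_empty (ψ : Cnf) : Cnf.restrict ψ ∅ = ψ := by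
  have h1 : ∀ C : Clause, Clause.restrict C ∅ = C := by
    intro C; apply Finset.filter_true_of_mem; intro l _; exact Finset.notMem_empty _
  unfold Cnf.restrict
  rw [Finset.filter_true_of_mem (by intro C _ l h; exact absurd h (Finset.notMem_empty _))]
  calc ψ.image (fun C => Clause.restrict C ∅) = ψ.image id := by
        apply Finset.image_congr; intro C _; exact h1 C
    _ = ψ := Finset.image_id

lemma nodup_restrict {pre : QPrefix} (hnd : (pre.map Prod.snd).Nodup) (α : Assignment) :
    ((QPrefix.restrict pre α).map Prod.snd).Nodup :=
  hnd.sublist (List.Sublist.map _ List.filter_sublist)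

lemma fresh_restrict (pre : QPrefix) (α : Assignment) :
    ∀ p ∈ QPrefix.restrict pre α, p.2 ∉ α.image Prod.fst := by
  intro p hp
  have := (List.mem_filter.1 hp).2
  simpa using this

lemma qbfSat_iff_sem {ψ : Cnf} :
    ∀ (pre : QPrefix) (α : Assignment), (pre.map Prod.snd).Nodup →
    (∀ p ∈ pre, p.2 ∉ α.image Prod.fst) → Assignment.consistent α →
    (qbfSat pre (Cnf.restrict ψ α) ↔ sem pre ψ α) := by
  intro pre
  induction pre with
  | nil =>
    intro α _ _ hc
    show (∃ σ, cnfSat σ (Cnf.restrict ψ α)) ↔ ∃ σ, cnfSat (ov α σ) ψ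
    exact exists_congr fun σ => cnfSat_restrict_iff hc σ
  | cons hd tl ih =>
    obtain ⟨q, x⟩ := hd
    intro α hnd hf hc
    have key : ∀ b : Bool, qbfSat tl (Cnf.restrict (Cnf.restrict ψ α) {(x, b)}) ↔
        sem tl ψ (insert (x, b) α) := by
      intro b
      obtain ⟨hnd', hf', hc', -, hx⟩ := step_facts hnd hf hc b
      rw [cnf_restrict_insert ψ hx]
      exact ih _ hnd' hf' hc'
    cases q with
    | ex => exact or_congr (key true) (key false)
    | all => exact and_congr (key true) (key false)

end GCG
namespace GCG

lemma restrict_cons_hit {q : Quant} {x : Var} {b : Bool} {tl : QPrefix} :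
    QPrefix.restrict ((q, x) :: tl) {(x, b)} = QPrefix.restrict tl {(x, b)} := by
  simp [QPrefix.restrict, Finset.image_singleton, List.filter_cons]

lemma restrict_cons_miss {q : Quant} {y x : Var} {b : Bool} {tl : QPrefix} (h : y ≠ x) :
    QPrefix.restrict ((q, y) :: tl) {(x, b)} = (q, y) :: QPrefix.restrict tl {(x, b)} := by
  simp [QPrefix.restrict, Finset.image_singleton, List.filter_cons, h]

lemma restrict_eq_self {pre : QPrefix} {α : Assignment}
    (h : ∀ p ∈ pre, p.2 ∉ α.image Prod.fst) : QPrefix.restrict pre α = pre :=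
  List.filter_eq_self.2 (fun p hp => by simp [h p hp])

lemma notmem_vars_of_nodup {x : Var} {tl : QPrefix}
    (hnd : ((x :: tl.map Prod.snd)).Nodup) : ∀ p ∈ tl, p.2 ∉ ({x} : Finset Var) := by
  intro p hp hmem
  rw [Finset.mem_singleton] at hmem
  exact (List.nodup_cons.1 hnd).1 (hmem ▸ List.mem_map.2 ⟨p, hp, rfl⟩)

lemma sem_force {ψ : Cnf} {x : Var} {b : Bool} :
    ∀ (pre : QPrefix) (α : Assignment), (pre.map Prod.snd).Nodup →
    (∀ p ∈ pre, p.2 ∉ α.image Prod.fst) → Assignment.consistent α →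
    (∀ τ, cnfSat τ ψ → (∀ m ∈ α, litSat τ m) → τ x = b) →
    sem pre ψ α → sem (QPrefix.restrict pre {(x, b)}) ψ (insert (x, b) α) := by
  intro pre
  induction pre with
  | nil =>
    rintro α _ _ hc H ⟨σ, hσ⟩
    have hτα : ∀ m ∈ α, litSat (ov α σ) m := fun m hm => ov_mem hc hm σ
    have hτx : ov α σ x = b := H _ hσ hτα
    by_cases hneg : (x, !b) ∈ α
    · exfalso
      have := ov_mem hc hneg σ
      rw [litSat] at this
      simp only at this
      rw [hτx] at this
      exact absurd this (by cases b <;> simp)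
    · refine ⟨σ, ?_⟩
      rw [ov_insert hneg, ← hτx, Function.update_eq_self]
      exact hσ
  | cons hd tl ih =>
    obtain ⟨q, y⟩ := hd
    intro α hnd hf hc H hsem
    rw [List.map_cons] at hnd
    by_cases hxy : y = x
    · subst hxy
      have hrw : QPrefix.restrict ((q, y) :: tl) {(y, b)} = tl := by
        rw [restrict_cons_hit, restrict_eq_self]
        intro p hp
        simpa using notmem_vars_of_nodup hnd p hp
      rw [hrw]
      have key : ∀ c, sem tl ψ (insert (y, c) α) → sem tl ψ (insert (y, b) α) := by
        intro c hs
        by_cases hcb : c = b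
        · exact hcb ▸ hs
        · exfalso
          obtain ⟨hnd', hf', hc', -, -⟩ := step_facts (by rw [List.map_cons]; exact hnd) hf hc c
          obtain ⟨τ, hτ, hτα⟩ := sem_witness tl _ hnd' hf' hc' hs
          have h1 : τ y = c := hτα (y, c) (Finset.mem_insert_self _ _)
          have h2 : τ y = b := H τ hτ (fun m hm => hτα m (Finset.mem_insert_of_mem hm))
          exact hcb ((h1.symm.trans h2))
      cases q with
      | ex =>
        rcases hsem with h | h
        · exact key true h
        · exact key false h
      | all => exact key true hsem.1
    · have hrw : QPrefix.restrict ((q, y) :: tl) {(x, b)}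
          = (q, y) :: QPrefix.restrict tl {(x, b)} := restrict_cons_miss hxy
      rw [hrw]
      have key : ∀ c, sem tl ψ (insert (y, c) α) →
          sem (QPrefix.restrict tl {(x, b)}) ψ (insert (y, c) (insert (x, b) α)) := by
        intro c hs
        obtain ⟨hnd', hf', hc', -, -⟩ := step_facts (by rw [List.map_cons]; exact hnd) hf hc c
        have := ih (insert (y, c) α) hnd' hf' hc'
          (fun τ hτ hτα => H τ hτ (fun m hm => hτα m (Finset.mem_insert_of_mem hm))) hs
        rwa [Finset.insert_comm] at this
      cases q with
      | ex => exact hsem.imp (key true) (key false)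
      | all => exact ⟨key true hsem.1, key false hsem.2⟩

lemma sem_flip_aux {ψ : Cnf} {x : Var} {b : Bool} :
    ∀ (pre : QPrefix) (α : Assignment), (pre.map Prod.snd).Nodup →
    (∀ p ∈ pre, p.2 ∉ α.image Prod.fst) → Assignment.consistent α →
    x ∉ pre.map Prod.snd → x ∉ α.image Prod.fst →
    (∀ τ, cnfSat τ ψ → (∀ m ∈ α, litSat τ m) → cnfSat (Function.update τ x b) ψ) →
    ∀ c, sem pre ψ (insert (x, c) α) → sem pre ψ (insert (x, b) α) := by
  intro pre
  induction pre with
  | nil =>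
    rintro α _ _ hc - hxα H c ⟨σ, hσ⟩
    have hnegc : (x, !c) ∉ α := fun h => hxα (Finset.mem_image.2 ⟨_, h, rfl⟩)
    have hnegb : (x, !b) ∉ α := fun h => hxα (Finset.mem_image.2 ⟨_, h, rfl⟩)
    rw [ov_insert hnegc] at hσ
    have hcons' : Assignment.consistent (insert (x, c) α) := consistent_insert hc hxα c
    have hτα : ∀ m ∈ α, litSat (Function.update (ov α σ) x c) m := by
      intro m hm
      have := ov_mem hcons' (Finset.mem_insert_of_mem hm) σ
      rwa [ov_insert hnegc] at this
    have h2 := H _ hσ hτα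
    rw [Function.update_idem] at h2
    exact ⟨σ, by rw [ov_insert hnegb]; exact h2⟩
  | cons hd tl ih =>
    obtain ⟨q, y⟩ := hd
    intro α hnd hf hc hxpre hxα H c hsem
    have hyx : x ≠ y := by
      intro h; exact hxpre (by rw [h]; exact List.mem_map.2 ⟨(q, y), List.mem_cons_self, rfl⟩)
    have hxtl : x ∉ tl.map Prod.snd := fun h => hxpre (by rw [List.map_cons]; exact List.mem_cons_of_mem _ h)
    have key : ∀ d, sem tl ψ (insert (x, c) (insert (y, d) α)) →
        sem tl ψ (insert (x, b) (insert (y, d) α)) := by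
      intro d hs
      obtain ⟨hnd', hf', hc', -, -⟩ := step_facts hnd hf hc d
      have hxα' : x ∉ (insert (y, d) α).image Prod.fst := by
        rw [Finset.image_insert]
        intro h
        rcases Finset.mem_insert.1 h with h | h
        · exact hyx h
        · exact hxα h
      exact ih _ hnd' hf' hc' hxtl hxα'
        (fun τ hτ hτα => H τ hτ (fun m hm => hτα m (Finset.mem_insert_of_mem hm))) c hs
    have key' : ∀ d, sem tl ψ (insert (y, d) (insert (x, c) α)) →
        sem tl ψ (insert (y, d) (insert (x, b) α)) := by
      intro d hs
      rw [Finset.insert_comm] at hs ⊢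
      exact key d hs
    cases q with
    | ex => exact hsem.imp (key' true) (key' false)
    | all => exact ⟨key' true hsem.1, key' false hsem.2⟩

lemma sem_flip {ψ : Cnf} {x : Var} {b : Bool} :
    ∀ (pre : QPrefix) (α : Assignment), (pre.map Prod.snd).Nodup →
    (∀ p ∈ pre, p.2 ∉ α.image Prod.fst) → Assignment.consistent α →
    x ∉ α.image Prod.fst →
    (∀ τ, cnfSat τ ψ → (∀ m ∈ α, litSat τ m) → cnfSat (Function.update τ x b) ψ) →
    sem pre ψ α → sem (QPrefix.restrict pre {(x, b)}) ψ (insert (x, b) α) := by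
  intro pre
  induction pre with
  | nil =>
    rintro α _ _ hc hxα H ⟨σ, hσ⟩
    have hnegb : (x, !b) ∉ α := fun h => hxα (Finset.mem_image.2 ⟨_, h, rfl⟩)
    have h2 := H _ hσ (fun m hm => ov_mem hc hm σ)
    exact ⟨σ, by rw [ov_insert hnegb]; exact h2⟩
  | cons hd tl ih =>
    obtain ⟨q, y⟩ := hd
    intro α hnd hf hc hxα H hsem
    rw [List.map_cons] at hnd
    by_cases hxy : y = x
    · subst hxy
      have hrw : QPrefix.restrict ((q, y) :: tl) {(y, b)} = tl := by
        rw [restrict_cons_hit, restrict_eq_self]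
        intro p hp
        simpa using notmem_vars_of_nodup hnd p hp
      rw [hrw]
      have hytl : y ∉ tl.map Prod.snd := (List.nodup_cons.1 hnd).1
      have key : ∀ c, sem tl ψ (insert (y, c) α) → sem tl ψ (insert (y, b) α) := by
        intro c hs
        obtain ⟨hnd', -, -, -, -⟩ := step_facts (by rw [List.map_cons]; exact hnd) hf hc c
        exact sem_flip_aux tl α hnd'
          (fun p hp h => hf p (List.mem_cons_of_mem _ hp) h) hc hytl hxα H c hs
      cases q with
      | ex =>
        rcases hsem with h | h
        · exact key true h
        · exact key false h
      | all => exact key true hsem.1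
    · rw [restrict_cons_miss hxy]
      have key : ∀ c, sem tl ψ (insert (y, c) α) →
          sem (QPrefix.restrict tl {(x, b)}) ψ (insert (y, c) (insert (x, b) α)) := by
        intro c hs
        obtain ⟨hnd', hf', hc', -, -⟩ := step_facts (by rw [List.map_cons]; exact hnd) hf hc c
        have hxα' : x ∉ (insert (y, c) α).image Prod.fst := by
          rw [Finset.image_insert]
          intro h
          rcases Finset.mem_insert.1 h with h | h
          · exact hxy h.symm
          · exact hxα h
        have := ih (insert (y, c) α) hnd' hf' hc' hxα'
          (fun τ hτ hτα => H τ hτ (fun m hm => hτα m (Finset.mem_insert_of_mem hm))) hs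
        rwa [Finset.insert_comm] at this
      cases q with
      | ex => exact hsem.imp (key true) (key false)
      | all => exact ⟨key true hsem.1, key false hsem.2⟩

lemma sem_univ {ψ : Cnf} {x : Var} (c : Bool) :
    ∀ (pre : QPrefix) (α : Assignment), (pre.map Prod.snd).Nodup →
    (Quant.all, x) ∈ pre →
    sem pre ψ α → sem (QPrefix.restrict pre {(x, c)}) ψ (insert (x, c) α) := by
  intro pre
  induction pre with
  | nil => intro α _ h; exact absurd h List.not_mem_nil
  | cons hd tl ih =>
    obtain ⟨q, y⟩ := hd
    intro α hnd hmem hsem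
    rw [List.map_cons] at hnd
    by_cases hxy : y = x
    · subst hxy
      have hq : q = Quant.all := by
        rcases List.mem_cons.1 hmem with h | h
        · exact (Prod.ext_iff.1 h.symm).1
        · exact absurd (List.mem_map.2 ⟨_, h, rfl⟩) (List.nodup_cons.1 hnd).1
      subst hq
      have hrw : QPrefix.restrict ((Quant.all, y) :: tl) {(y, c)} = tl := by
        rw [restrict_cons_hit, restrict_eq_self]
        intro p hp
        simpa using notmem_vars_of_nodup hnd p hp
      rw [hrw]
      cases c with
      | true => exact hsem.1
      | false => exact hsem.2
    · have hmem' : (Quant.all, x) ∈ tl := by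
        rcases List.mem_cons.1 hmem with h | h
        · exact absurd (Prod.ext_iff.1 h).2 (Ne.symm hxy)
        · exact h
      rw [restrict_cons_miss hxy]
      have key : ∀ d, sem tl ψ (insert (y, d) α) →
          sem (QPrefix.restrict tl {(x, c)}) ψ (insert (y, d) (insert (x, c) α)) := by
        intro d hs
        have := ih (insert (y, d) α) (List.nodup_cons.1 hnd).2 hmem' hs
        rwa [Finset.insert_comm] at this
      cases q with
      | ex => exact hsem.imp (key true) (key false)
      | all => exact ⟨key true hsem.1, key false hsem.2⟩

end GCG
namespace GCG

lemma sem_ins {ψ : Cnf} {C0 : Clause} {m : Lit} (hm : m ∈ C0) :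
    ∀ (pre : QPrefix) (α : Assignment), (pre.map Prod.snd).Nodup →
    (∀ p ∈ pre, p.2 ∉ α.image Prod.fst) → Assignment.consistent α →
    m ∈ α → sem pre ψ α → sem pre (insert C0 ψ) α := by
  intro pre
  induction pre with
  | nil =>
    rintro α _ _ hc hmα ⟨σ, hσ⟩
    refine ⟨σ, fun C hC => ?_⟩
    rcases Finset.mem_insert.1 hC with rfl | hC
    · exact ⟨m, hm, ov_mem hc hmα σ⟩
    · exact hσ C hC
  | cons hd tl ih =>
    obtain ⟨q, x⟩ := hd
    intro α hnd hf hc hmα hsem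
    have key : ∀ c, sem tl ψ (insert (x, c) α) → sem tl (insert C0 ψ) (insert (x, c) α) := by
      intro c hs
      obtain ⟨hnd', hf', hc', -, -⟩ := step_facts hnd hf hc c
      exact ih _ hnd' hf' hc' (Finset.mem_insert_of_mem hmα) hs
    cases q with
    | ex => exact hsem.imp (key true) (key false)
    | all => exact ⟨key true hsem.1, key false hsem.2⟩

/-- Extract basic facts from a literal occurring in `ψ[B]`. -/
lemma occurs_facts {ψ : Cnf} {B : Assignment} {l : Lit}
    (h : occurs (Cnf.restrict ψ B) l) :
    l ∉ B ∧ Lit.negate l ∉ B ∧ l.1 ∉ B.image Prod.fst := by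
  obtain ⟨D, hD, hlD⟩ := h
  obtain ⟨C, hCf, rfl⟩ := Finset.mem_image.1 hD
  obtain ⟨hCψ, hkept⟩ := Finset.mem_filter.1 hCf
  obtain ⟨hlC, hlneg⟩ := Finset.mem_filter.1 hlD
  have hlB : l ∉ B := fun h => hkept l h hlC
  exact ⟨hlB, hlneg, var_notin hlB hlneg⟩

lemma chain_sound {pre : QPrefix} {ψ : Cnf} {A0 A : Assignment}
    (hnd : (pre.map Prod.snd).Nodup) (hcA : Assignment.consistent A) :
    ∀ {ls : List Lit}, PropChain pre ψ A0 ls → A0 ∪ ls.toFinset ⊆ A →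
    sem (QPrefix.restrict pre A0) ψ A0 →
    sem (QPrefix.restrict pre (A0 ∪ ls.toFinset)) ψ (A0 ∪ ls.toFinset) := by
  intro ls hchain
  induction hchain with
  | nil => intro _ h; simpa using h
  | @unit ls l h hu ih =>
    intro hsub hbase
    rw [List.toFinset_cons, Finset.union_insert] at hsub ⊢
    have hBsub : A0 ∪ ls.toFinset ⊆ A := (Finset.subset_insert _ _).trans hsub
    have hIH := ih hBsub hbase
    set B := A0 ∪ ls.toFinset with hB
    have hcB : Assignment.consistent B := consistent_subset hcA hBsub
    obtain ⟨hclause, hex⟩ := hu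
    obtain ⟨C, hCf, hres⟩ := Finset.mem_image.1 hclause
    obtain ⟨hCψ, hkept⟩ := Finset.mem_filter.1 hCf
    have hlres : l ∈ Clause.restrict C B := by rw [hres]; exact Finset.mem_singleton_self l
    obtain ⟨hlC, hlneg⟩ := Finset.mem_filter.1 hlres
    have hlB : l ∉ B := fun h' => hkept l h' hlC
    have hx : l.1 ∉ B.image Prod.fst := var_notin hlB hlneg
    have H : ∀ τ, cnfSat τ ψ → (∀ m ∈ B, litSat τ m) → τ l.1 = l.2 := by
      intro τ hτ hτB
      obtain ⟨m, hmC, hms⟩ := hτ C hCψ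
      have hmneg : Lit.negate m ∉ B := by
        intro h'
        have h2 := hτB _ h'
        rw [litSat] at h2 hms
        simp only [Lit.negate] at h2
        rw [hms] at h2
        exact absurd h2 (by cases m.2 <;> simp)
      have hmem : m ∈ Clause.restrict C B := Finset.mem_filter.2 ⟨hmC, hmneg⟩
      rw [hres, Finset.mem_singleton] at hmem
      rw [← hmem]; exact hms
    have hforce := sem_force (QPrefix.restrict pre B) B (nodup_restrict hnd B)
      (fresh_restrict pre B) hcB H hIH
    rw [qprefix_restrict_insert] at hforce
    simpa using hforce
  | @pureEx ls l h hp he ih =>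
    intro hsub hbase
    rw [List.toFinset_cons, Finset.union_insert] at hsub ⊢
    have hBsub : A0 ∪ ls.toFinset ⊆ A := (Finset.subset_insert _ _).trans hsub
    have hIH := ih hBsub hbase
    set B := A0 ∪ ls.toFinset with hB
    have hcB : Assignment.consistent B := consistent_subset hcA hBsub
    obtain ⟨hlB, hlneg, hx⟩ := occurs_facts hp.1
    have H : ∀ τ, cnfSat τ ψ → (∀ m ∈ B, litSat τ m) →
        cnfSat (Function.update τ l.1 l.2) ψ := by
      intro τ hτ hτB C hC
      by_cases hk : ∀ m ∈ B, m ∉ C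
      · obtain ⟨m, hmC, hms⟩ := hτ C hC
        by_cases hmx : m.1 = l.1
        · by_cases hmb : m.2 = l.2
          · refine ⟨m, hmC, ?_⟩
            rw [litSat, hmx, Function.update_self]
            exact hmb.symm
          · exfalso
            have hm2 : m.2 = !l.2 := by cases hm2 : m.2 <;> cases hl2 : l.2 <;> simp_all
            have hmeq : m = Lit.negate l := by
              rw [Lit.negate, ← hmx, ← hm2]
            have hnm : Lit.negate m ∉ B := by
              have : Lit.negate m = l := by
                rw [hmeq, Lit.negate, Lit.negate]
                simp
              rw [this]; exact hlB
            have hocc : occurs (Cnf.restrict ψ B) (Lit.negate l) := by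
              refine ⟨Clause.restrict C B,
                Finset.mem_image.2 ⟨C, Finset.mem_filter.2 ⟨hC, hk⟩, rfl⟩, ?_⟩
              rw [← hmeq]
              exact Finset.mem_filter.2 ⟨hmC, hnm⟩
            exact hp.2 hocc
        · exact ⟨m, hmC, by rw [litSat, Function.update_of_ne hmx]; exact hms⟩
      · push_neg at hk
        obtain ⟨m, hmB, hmC⟩ := hk
        have hms := hτB m hmB
        have hmx : m.1 ≠ l.1 := fun h' => hx (Finset.mem_image.2 ⟨m, hmB, h'⟩)
        exact ⟨m, hmC, by rw [litSat, Function.update_of_ne hmx]; exact hms⟩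
    have hflip := sem_flip (QPrefix.restrict pre B) B (nodup_restrict hnd B)
      (fresh_restrict pre B) hcB hx H hIH
    rw [qprefix_restrict_insert] at hflip
    simpa using hflip
  | @pureAll ls l h hp ha ih =>
    intro hsub hbase
    rw [List.toFinset_cons, Finset.union_insert] at hsub ⊢
    have hBsub : A0 ∪ ls.toFinset ⊆ A := (Finset.subset_insert _ _).trans hsub
    have hIH := ih hBsub hbase
    set B := A0 ∪ ls.toFinset with hB
    obtain ⟨hlB, hlneg, hx⟩ := occurs_facts hp.1
    have hmem : (Quant.all, l.1) ∈ QPrefix.restrict pre B :=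
      List.mem_filter.2 ⟨ha, by simpa using hx⟩
    have huniv := sem_univ (!l.2) (QPrefix.restrict pre B) B (nodup_restrict hnd B) hmem hIH
    rw [qprefix_restrict_insert] at huniv
    have heq : ((l.1, !l.2) : Lit) = Lit.negate l := rfl
    rw [heq] at huniv
    exact huniv

end GCG
namespace GCG

lemma restrict_eq_drop {pre : QPrefix} {A0 : Assignment} {k : ℕ}
    (hnd : (pre.map Prod.snd).Nodup)
    (himg : A0.image Prod.fst = ((pre.take k).map Prod.snd).toFinset) :
    QPrefix.restrict pre A0 = pre.drop k := by
  have hnda : ((pre.take k).map Prod.snd ++ (pre.drop k).map Prod.snd).Nodup := by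
    rw [← List.map_append, List.take_append_drop]; exact hnd
  have hdisj := (List.nodup_append.1 hnda).2.2
  conv_lhs => rw [← List.take_append_drop k pre]
  unfold QPrefix.restrict
  rw [List.filter_append]
  have h1 : (pre.take k).filter (fun q => decide (q.2 ∉ A0.image Prod.fst)) = [] := by
    rw [List.filter_eq_nil_iff]
    intro q hq
    simp only [decide_eq_true_eq, not_not]
    rw [himg]
    exact List.mem_toFinset.2 (List.mem_map.2 ⟨q, hq, rfl⟩)
  have h2 : (pre.drop k).filter (fun q => decide (q.2 ∉ A0.image Prod.fst)) = pre.drop k := by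
    rw [List.filter_eq_self]
    intro q hq
    simp only [decide_eq_true_eq]
    rw [himg]
    intro hmem
    exact hdisj _ (List.mem_toFinset.1 hmem) _ (List.mem_map.2 ⟨q, hq, rfl⟩) rfl
  rw [h1, h2, List.nil_append]

lemma core {pre : QPrefix} {ψ : Cnf} {A0 : Assignment} {k : ℕ}
    (hnd : (pre.map Prod.snd).Nodup) (hcA0 : Assignment.consistent A0)
    (himg : A0.image Prod.fst = ((pre.take k).map Prod.snd).toFinset)
    (hun0 : ¬ sem (QPrefix.restrict pre A0) ψ A0) :
    ∀ (d j : ℕ) (α : Assignment), j + d = k →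
    α ⊆ A0 →
    (∀ m ∈ A0, m.1 ∈ (pre.take j).map Prod.snd → m ∈ α) →
    (∀ m ∈ α, m.1 ∈ (pre.take j).map Prod.snd) →
    sem (pre.drop j) ψ α → sem (pre.drop j) (insert (A0.image Lit.negate) ψ) α := by
  have absurd_case : ∀ (j : ℕ) (α : Assignment), pre.drop j = pre.drop k →
      (∀ v, v ∈ (pre.take k).map Prod.snd → v ∈ (pre.take j).map Prod.snd) →
      α ⊆ A0 → (∀ m ∈ A0, m.1 ∈ (pre.take j).map Prod.snd → m ∈ α) →
      sem (pre.drop j) ψ α → False := by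
    intro j α hdrop hvk hsub hcov hsem
    have hαA0 : α = A0 := by
      apply Finset.Subset.antisymm hsub
      intro m hm
      apply hcov m hm
      apply hvk
      have : m.1 ∈ A0.image Prod.fst := Finset.mem_image.2 ⟨m, hm, rfl⟩
      rw [himg] at this
      exact List.mem_toFinset.1 this
    apply hun0
    rw [restrict_eq_drop hnd himg, ← hdrop, ← hαA0]
    exact hsem
  intro d
  induction d with
  | zero =>
    intro j α hjk hsub hcov hvar hsem
    subst hjk
    exact (absurd_case _ α (by rw [Nat.add_zero]) (by rw [Nat.add_zero]; exact fun v h => h)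
      hsub hcov hsem).elim
  | succ d ihd =>
    intro j α hjk hsub hcov hvar hsem
    cases hdropj : pre.drop j with
    | nil =>
      have hlen : pre.length ≤ j := List.drop_eq_nil_iff.1 hdropj
      have hlenk : pre.length ≤ k := hlen.trans (by omega)
      refine (absurd_case j α ?_ ?_ hsub hcov hsem).elim
      · rw [hdropj, List.drop_eq_nil_iff.2 hlenk]
      · rw [List.take_of_length_le hlen, List.take_of_length_le hlenk]
        exact fun v h => h
    | cons hd rest =>
      obtain ⟨q, y⟩ := hd
      have hrest : pre.drop (j + 1) = rest := by
        rw [← List.drop_drop, hdropj, List.drop_one, List.tail_cons]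
      have htakej1 : pre.take (j + 1) = pre.take j ++ [(q, y)] := by
        rw [List.take_add, hdropj]
        rfl
      have htakek : (q, y) ∈ pre.take k := by
        have h : pre.take k = pre.take j ++ (pre.drop j).take (d + 1) := by
          rw [← hjk, List.take_add]
        rw [h, hdropj]
        exact List.mem_append_right _ (List.mem_cons_self)
      have hyA0 : y ∈ A0.image Prod.fst := by
        rw [himg]
        exact List.mem_toFinset.2 (List.mem_map.2 ⟨(q, y), htakek, rfl⟩)
      obtain ⟨m0, hm0, hm0y⟩ := Finset.mem_image.1 hyA0
      have hnda : ((pre.take j).map Prod.snd ++ (pre.drop j).map Prod.snd).Nodup := by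
        rw [← List.map_append, List.take_append_drop]; exact hnd
      have hdisj := (List.nodup_append.1 hnda).2.2
      have hnd_dropj : ((pre.drop j).map Prod.snd).Nodup := (List.nodup_append.1 hnda).2.1
      have hyrest : y ∉ rest.map Prod.snd := by
        rw [hdropj, List.map_cons] at hnd_dropj
        exact (List.nodup_cons.1 hnd_dropj).1
      have hndrest : (rest.map Prod.snd).Nodup := by
        rw [hdropj, List.map_cons] at hnd_dropj
        exact (List.nodup_cons.1 hnd_dropj).2
      have hymem : y ∈ (pre.drop j).map Prod.snd := by
        rw [hdropj, List.map_cons]; exact List.mem_cons_self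
      have hyα : y ∉ α.image Prod.fst := by
        intro h
        obtain ⟨m, hmα, hmy⟩ := Finset.mem_image.1 h
        exact hdisj _ (hvar m hmα) _ hymem hmy
      have branch : ∀ c, sem rest ψ (insert (y, c) α) →
          sem rest (insert (A0.image Lit.negate) ψ) (insert (y, c) α) := by
        intro c hs
        by_cases hmem : (y, c) ∈ A0
        · have hres := ihd (j + 1) (insert (y, c) α) (by omega)
            (Finset.insert_subset hmem hsub)
            (by
              intro m hm hmv
              rw [htakej1, List.map_append] at hmv
              rcases List.mem_append.1 hmv with h | h
              · exact Finset.mem_insert_of_mem (hcov m hm h)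
              · have hm1 : m.1 = y := by simpa using h
                have : m = (y, c) := by
                  by_cases hm2 : m.2 = c
                  · rw [← hm1, ← hm2]
                  · exfalso
                    have hmeq : m = Lit.negate (y, c) := by
                      rw [Lit.negate]
                      have : m.2 = !c := Bool.eq_not_iff.mpr hm2
                      rw [← hm1, ← this]
                    exact hcA0 _ hmem (by rw [← hmeq]; exact hm)
                rw [this]
                exact Finset.mem_insert_self _ _)
            (by
              intro m hm
              rw [htakej1, List.map_append]
              rcases Finset.mem_insert.1 hm with rfl | hm
              · exact List.mem_append_right _ (by simp)
              · exact List.mem_append_left _ (hvar m hm))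
            (by rw [hrest]; exact hs)
          rwa [hrest] at hres
        · have hc0 : c = !m0.2 := by
            by_cases h : c = m0.2
            · exfalso
              apply hmem
              have : m0 = (y, c) := by rw [← hm0y, h]
              exact this ▸ hm0
            · exact Bool.eq_not_iff.mpr h
          have hmC0 : (y, c) ∈ A0.image Lit.negate :=
            Finset.mem_image.2 ⟨m0, hm0, by rw [Lit.negate, hm0y, hc0]⟩
          have hfresh : ∀ p ∈ rest, p.2 ∉ (insert (y, c) α).image Prod.fst := by
            intro p hp hmem'
            rw [Finset.image_insert] at hmem'
            rcases Finset.mem_insert.1 hmem' with h | h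
            · exact hyrest (by simp only at h; exact h ▸ List.mem_map.2 ⟨p, hp, rfl⟩)
            · obtain ⟨m, hmα, hmp⟩ := Finset.mem_image.1 h
              have h2 : p.2 ∈ (pre.drop j).map Prod.snd := by
                rw [hdropj, List.map_cons]
                exact List.mem_cons_of_mem _ (List.mem_map.2 ⟨p, hp, rfl⟩)
              exact hdisj _ (hvar m hmα) _ h2 hmp
          have hcα : Assignment.consistent (insert (y, c) α) :=
            consistent_insert (consistent_subset hcA0 hsub) hyα c
          exact sem_ins hmC0 rest _ hndrest hfresh hcα (Finset.mem_insert_self _ _) hs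
      rw [hdropj] at hsem
      cases q with
      | ex => exact hsem.imp (branch true) (branch false)
      | all => exact ⟨branch true hsem.1, branch false hsem.2⟩

end GCG
/-- Generalized conflict generation: if `A` is a QCDCL assignment and the QBF
`φ[A]` is unsatisfiable, then adding the clause `C = ⋁_{l ∈ A} ¬l`
conjunctively to the matrix preserves satisfiability. -/
theorem generalized_conflict_generation
    (pre : QPrefix) (ψ : Cnf) (A : Assignment)
    (hnodup : (pre.map Prod.snd).Nodup)
    (hA : QCDCLAssignment pre ψ A)
    (hunsat : ¬ qbfSat (QPrefix.restrict pre A) (Cnf.restrict ψ A)) :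
    qbfSat pre ψ ↔ qbfSat pre (insert (A.image Lit.negate) ψ) := by
  obtain ⟨hcons, A0, ls, k, hAeq, himg, hchain⟩ := hA
  have hsemA : ¬ GCG.sem (QPrefix.restrict pre A) ψ A := fun h =>
    hunsat ((GCG.qbfSat_iff_sem (QPrefix.restrict pre A) A (GCG.nodup_restrict hnodup A)
      (GCG.fresh_restrict pre A) hcons).2 h)
  have hA0sub : A0 ⊆ A := by rw [hAeq]; exact Finset.subset_union_left
  have hcA0 : Assignment.consistent A0 := GCG.consistent_subset hcons hA0sub
  have hun0 : ¬ GCG.sem (QPrefix.restrict pre A0) ψ A0 := by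
    intro h
    apply hsemA
    have h2 := GCG.chain_sound hnodup hcons hchain
      (by rw [hAeq]) h
    rwa [← hAeq] at h2
  have hfresh0 : ∀ p ∈ pre, p.2 ∉ (∅ : Assignment).image Prod.fst := by simp
  have hcons0 : Assignment.consistent (∅ : Assignment) := by
    intro l hl; exact absurd hl (Finset.notMem_empty _)
  have hiff1 : qbfSat pre ψ ↔ GCG.sem pre ψ ∅ := by
    have h := GCG.qbfSat_iff_sem (ψ := ψ) pre ∅ hnodup hfresh0 hcons0
    rwa [GCG.cnf_restrict_empty] at h
  have hiff2 : qbfSat pre (insert (A.image Lit.negate) ψ) ↔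
      GCG.sem pre (insert (A.image Lit.negate) ψ) ∅ := by
    have h := GCG.qbfSat_iff_sem (ψ := insert (A.image Lit.negate) ψ) pre ∅ hnodup hfresh0 hcons0
    rwa [GCG.cnf_restrict_empty] at h
  constructor
  · intro h
    have h1 := hiff1.1 h
    have h2 := GCG.core hnodup hcA0 himg hun0 k 0 ∅ (by omega) (Finset.empty_subset _)
      (by intro m hm hmv; simp at hmv) (by intro m hm; exact absurd hm (Finset.notMem_empty _))
      (by simpa using h1)
    rw [List.drop_zero] at h2
    apply hiff2.2
    refine GCG.semMono ?_ pre ∅ h2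
    intro τ hτ C hC
    rcases Finset.mem_insert.1 hC with rfl | hC
    · obtain ⟨m, hm, hms⟩ := hτ _ (Finset.mem_insert_self _ _)
      exact ⟨m, Finset.image_subset_image hA0sub hm, hms⟩
    · exact hτ _ (Finset.mem_insert_of_mem hC)
  · intro h
    apply hiff1.2
    refine GCG.semMono ?_ pre ∅ (hiff2.1 h)
    intro τ hτ C hC
    exact hτ C (Finset.mem_insert_of_mem hC)
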